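/- arXiv:0902.1650 — 2 statements merged into one kernel-verified Lean document; each statement's English description precedes it below -/
import Mathlib

section
/- The shifted Hankel determinant of the Catalan numbers satisfies det((C_{i+j+1})_{i,j=0}^{n-1}) = 1 for all n ≥ 1. -/
open Finset

/-- Ballot-type numbers: `g i k = C(2i+1, i-k) - C(2i+1, i-k-1)` written via symmetry. -/
noncomputable def gB (i k : ℕ) : ℤ :=
  ((2 * i + 1).choose (i + k + 1) : ℤ) - ((2 * i + 1).choose (i + k + 2) : ℤ)

lemma pascal2 (n m : ℕ) :
    (n + 2).choose (m + 2) = n.choose m + 2 * n.choose (m + 1) + n.choose (m + 2) := by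
  rw [Nat.choose_succ_succ, Nat.choose_succ_succ, Nat.choose_succ_succ]
  ring

lemma gB_zero_of_lt {i k : ℕ} (h : i < k) : gB i k = 0 := by
  unfold gB
  rw [Nat.choose_eq_zero_of_lt (by omega), Nat.choose_eq_zero_of_lt (by omega)]
  simp

lemma gB_diag (i : ℕ) : gB i i = 1 := by
  unfold gB
  have h1 : (2 * i + 1).choose (i + i + 1) = 1 := by
    have : i + i + 1 = 2 * i + 1 := by omega
    rw [this, Nat.choose_self]
  rw [h1, Nat.choose_eq_zero_of_lt (by omega)]
  simp

lemma gB_zero_row (k : ℕ) : gB 0 (k + 1) = 0 := gB_zero_of_lt (by omega)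

lemma gB_zero_zero : gB 0 0 = 1 := gB_diag 0

lemma gB_rec (i k : ℕ) :
    gB (i + 1) (k + 1) = gB i k + 2 * gB i (k + 1) + gB i (k + 2) := by
  unfold gB
  have e1 : 2 * (i + 1) + 1 = 2 * i + 1 + 2 := by omega
  have e2 : (i + 1) + (k + 1) + 1 = (i + k + 1) + 2 := by omega
  have e3 : (i + 1) + (k + 1) + 2 = (i + k + 2) + 2 := by omega
  rw [e1, e2, e3, pascal2, pascal2]
  push_cast
  have : i + k + 1 + 1 = i + k + 2 := by omega
  rw [this]
  have : i + k + 2 + 1 = i + k + 3 := by omega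
  rw [this]
  have : i + k + 1 + 2 = i + k + 3 := by omega
  rw [this]
  have : i + k + 2 + 2 = i + k + 4 := by omega
  rw [this]
  have : i + (k + 1) + 1 = i + k + 2 := by omega
  rw [this]
  have : i + (k + 1) + 2 = i + k + 3 := by omega
  rw [this]
  have : i + (k + 2) + 1 = i + k + 3 := by omega
  rw [this]
  have : i + (k + 2) + 2 = i + k + 4 := by omega
  rw [this]
  ring

lemma choose_symm_mid (i : ℕ) : (2 * i + 1).choose i = (2 * i + 1).choose (i + 1) := by
  rw [← Nat.choose_symm (show i ≤ 2 * i + 1 by omega)]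
  congr 1
  omega

lemma gB_rec0 (i : ℕ) : gB (i + 1) 0 = 2 * gB i 0 + gB i 1 := by
  unfold gB
  have e1 : 2 * (i + 1) + 1 = 2 * i + 1 + 2 := by omega
  have e2 : (i + 1) + 0 + 1 = i + 2 := by omega
  have e3 : (i + 1) + 0 + 2 = (i + 1) + 2 := by omega
  rw [e1, e2, e3]
  have p1 : (2 * i + 1 + 2).choose (i + 2) = (2*i+1).choose i + 2 * (2*i+1).choose (i+1) +
      (2*i+1).choose (i+2) := by
    have : i + 2 = i + 2 := rfl
    have := pascal2 (2 * i + 1) i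
    simpa using this
  have p2 : (2 * i + 1 + 2).choose ((i + 1) + 2) = (2*i+1).choose (i+1) + 2 * (2*i+1).choose (i+2) +
      (2*i+1).choose (i+3) := by
    have := pascal2 (2 * i + 1) (i + 1)
    have h1 : i + 1 + 1 = i + 2 := by omega
    have h2 : i + 1 + 2 = i + 3 := by omega
    rw [h1, h2] at this
    exact this
  rw [p1, p2, choose_symm_mid]
  push_cast
  have h1 : i + 0 + 1 = i + 1 := by omega
  have h2 : i + 0 + 2 = i + 2 := by omega
  have h3 : i + 1 + 1 = i + 2 := by omega
  have h4 : i + 1 + 2 = i + 3 := by omega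
  rw [h1, h2, h3, h4]
  ring

lemma gB_zero_col (i : ℕ) : gB i 0 = (catalan (i + 1) : ℤ) := by
  have key : ((i : ℤ) + 2) * gB i 0 = ((i : ℤ) + 2) * (catalan (i + 1) : ℤ) := by
    have hc : ((i + 1) + 1) * catalan (i + 1) = Nat.centralBinom (i + 1) :=
      succ_mul_catalan_eq_centralBinom (i + 1)
    have hcb : Nat.centralBinom (i + 1) = (2 * i + 1).choose i + (2 * i + 1).choose (i + 1) := by
      unfold Nat.centralBinom
      have : 2 * (i + 1) = (2 * i + 1) + 1 := by omega
      rw [this, Nat.choose_succ_succ]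
    have hsym := choose_symm_mid i
    have hratio : (2 * i + 1).choose (i + 2) * (i + 2) =
        (2 * i + 1).choose (i + 1) * i := by
      have := Nat.choose_succ_right_eq (2 * i + 1) (i + 1)
      have h : 2 * i + 1 - (i + 1) = i := by omega
      rw [h] at this
      have h2 : i + 1 + 1 = i + 2 := by omega
      rw [h2] at this
      exact this
    unfold gB
    have h2 : i + 0 + 1 = i + 1 := by omega
    have h3 : i + 0 + 2 = i + 2 := by omega
    rw [h2, h3]
    have hNat : ((i:ℤ) + 2) * (((2 * i + 1).choose (i + 1) : ℤ) - ((2 * i + 1).choose (i + 2) : ℤ))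
        = 2 * ((2 * i + 1).choose (i + 1) : ℤ) := by
      have hr : ((2 * i + 1).choose (i + 2) : ℤ) * ((i:ℤ) + 2)
          = ((2 * i + 1).choose (i + 1) : ℤ) * (i:ℤ) := by
        exact_mod_cast congrArg (Nat.cast : ℕ → ℤ) hratio
      nlinarith [hr]
    rw [hNat]
    have hrhs : ((i:ℤ) + 2) * (catalan (i + 1) : ℤ)
        = 2 * ((2 * i + 1).choose (i + 1) : ℤ) := by
      have := congrArg (Nat.cast : ℕ → ℤ) hc
      push_cast at this
      rw [show ((i:ℤ) + 1 + 1) = (i:ℤ) + 2 by ring] at this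
      rw [this]
      have := congrArg (Nat.cast : ℕ → ℤ) hcb
      push_cast at this
      rw [this]
      have := congrArg (Nat.cast : ℕ → ℤ) hsym
      push_cast at this
      rw [this]
      ring
    rw [hrhs]
  have hne : ((i : ℤ) + 2) ≠ 0 := by positivity
  exact mul_left_cancel₀ hne key

/-- partial sums -/
noncomputable def SB (N i j : ℕ) : ℤ := ∑ k ∈ range N, gB i k * gB j k

lemma SB_stable {N N' i j : ℕ} (h : i < N) (h' : N ≤ N') : SB N i j = SB N' i j := by
  unfold SB
  apply Finset.sum_subset
  · exact Finset.range_subset_range.mpr h'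
  · intro k _ hk
    rw [gB_zero_of_lt (by simp at hk ⊢; omega), zero_mul]

lemma SB_eq {N N' i j : ℕ} (h : i < N) (h' : i < N') : SB N i j = SB N' i j := by
  rcases le_total N N' with hle | hle
  · exact SB_stable h hle
  · exact (SB_stable h' hle).symm

lemma SB_key (i j : ℕ) : SB (i + j + 2) (i + 1) j = SB (i + j + 2) i (j + 1) := by
  unfold SB
  rw [Finset.sum_range_succ' (fun k => gB (i+1) k * gB j k) (i + j + 1),
      Finset.sum_range_succ' (fun k => gB i k * gB (j+1) k) (i + j + 1)]
  simp only [gB_rec, gB_rec0]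
  have expand : ∀ f h : ℕ → ℤ,
      ∑ k ∈ range (i + j + 1), (f k + 2 * f (k+1) + f (k+2)) * h (k+1)
      = (∑ k ∈ range (i + j + 1), f k * h (k+1))
        + 2 * (∑ k ∈ range (i + j + 1), f (k+1) * h (k+1))
        + (∑ k ∈ range (i + j + 1), f (k+2) * h (k+1)) := by
    intro f h
    rw [Finset.mul_sum, ← Finset.sum_add_distrib, ← Finset.sum_add_distrib]
    apply Finset.sum_congr rfl
    intro k _
    ring
  rw [expand (gB i) (gB j)]
  have comm2 : ∑ k ∈ range (i + j + 1), gB i (k+1) * (gB j k + 2 * gB j (k+1) + gB j (k+2))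
      = ∑ k ∈ range (i + j + 1), (gB j k + 2 * gB j (k+1) + gB j (k+2)) * gB i (k+1) := by
    apply Finset.sum_congr rfl; intro k _; ring
  rw [comm2, expand (gB j) (gB i)]
  -- A = Σ_{k<i+j+1} gB i k * gB j (k+1); C' = Σ_{k<i+j+1} gB j (k+2) * gB i (k+1)
  have hA : ∑ k ∈ range (i + j + 1), gB i k * gB j (k+1)
      = gB i 0 * gB j 1 + ∑ k ∈ range (i + j + 1), gB j (k+2) * gB i (k+1) := by
    rw [Finset.sum_range_succ' (fun k => gB i k * gB j (k+1)) (i + j)]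
    rw [Finset.sum_range_succ (fun k => gB j (k+2) * gB i (k+1)) (i + j)]
    rw [gB_zero_of_lt (show i < i + j + 1 by omega), mul_zero, add_zero]
    have : ∑ k ∈ range (i + j), gB i (k+1) * gB j (k+1+1)
        = ∑ k ∈ range (i + j), gB j (k+2) * gB i (k+1) := by
      apply Finset.sum_congr rfl
      intro k _
      show gB i (k+1) * gB j (k+2) = gB j (k+2) * gB i (k+1)
      ring
    rw [this]
    simp only [Nat.zero_add]
    ring
  have hA' : ∑ k ∈ range (i + j + 1), gB j k * gB i (k+1)
      = gB j 0 * gB i 1 + ∑ k ∈ range (i + j + 1), gB i (k+2) * gB j (k+1) := by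
    rw [Finset.sum_range_succ' (fun k => gB j k * gB i (k+1)) (i + j)]
    rw [Finset.sum_range_succ (fun k => gB i (k+2) * gB j (k+1)) (i + j)]
    rw [gB_zero_of_lt (show j < i + j + 1 by omega), mul_zero, add_zero]
    have : ∑ k ∈ range (i + j), gB j (k+1) * gB i (k+1+1)
        = ∑ k ∈ range (i + j), gB i (k+2) * gB j (k+1) := by
      apply Finset.sum_congr rfl
      intro k _
      show gB j (k+1) * gB i (k+2) = gB i (k+2) * gB j (k+1)
      ring
    rw [this]
    simp only [Nat.zero_add]
    ring
  have hB : ∑ k ∈ range (i + j + 1), gB i (k+1) * gB j (k+1)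
      = ∑ k ∈ range (i + j + 1), gB j (k+1) * gB i (k+1) := by
    apply Finset.sum_congr rfl; intro k _; ring
  rw [hA, hA', hB]
  ring

lemma SB_main : ∀ i j : ℕ, SB (i + j + 1) i j = gB (i + j) 0 := by
  intro i
  induction i with
  | zero =>
    intro j
    unfold SB
    simp only [Nat.zero_add]
    rw [Finset.sum_range_succ' (fun k => gB 0 k * gB j k) j]
    simp only [gB_zero_row, zero_mul, Finset.sum_const_zero, zero_add, gB_zero_zero, one_mul]
  | succ i ih =>
    intro j
    have h1 : (i + 1) + j + 1 = i + j + 2 := by omega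
    rw [h1, SB_key i j]
    have h2 : i + j + 2 = i + (j + 1) + 1 := by omega
    rw [h2, ih (j + 1)]
    congr 1
    omega

lemma SB_catalan (i j : ℕ) : SB (i + j + 1) i j = (catalan (i + j + 1) : ℤ) := by
  rw [SB_main, gB_zero_col]

theorem stmt_9 (n : ℕ) (hn : 1 ≤ n) :
    Matrix.det (Matrix.of (fun i j : Fin n => (catalan (i.1 + j.1 + 1) : ℤ))) = 1 := by
  set L : Matrix (Fin n) (Fin n) ℤ := Matrix.of (fun i j : Fin n => gB i.1 j.1) with hL
  have hfac : Matrix.of (fun i j : Fin n => (catalan (i.1 + j.1 + 1) : ℤ)) = L * L.transpose := by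
    ext i j
    rw [Matrix.mul_apply]
    simp only [Matrix.transpose_apply, hL, Matrix.of_apply]
    rw [Fin.sum_univ_eq_sum_range (fun k => gB i.1 k * gB j.1 k) n]
    have : ∑ k ∈ range n, gB i.1 k * gB j.1 k = SB n i.1 j.1 := rfl
    rw [this, SB_eq (show (i:ℕ) < n from i.2) (show (i:ℕ) < i.1 + j.1 + 1 by omega),
      SB_catalan]
  have hLtri : L.det = 1 := by
    have : L.det = ∏ i : Fin n, L i i := by
      apply Matrix.det_of_lowerTriangular
      intro i j hij
      exact gB_zero_of_lt hij
    rw [this]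
    apply Finset.prod_eq_one
    intro i _
    exact gB_diag i.1
  rw [hfac, Matrix.det_mul, Matrix.det_transpose, hLtri]
  norm_num
end

section
/- For all n ≥ 0 and a in a field with (q^k a; q)_{n+1} ≠ 0 for 0 ≤ k ≤ n and (qa; q^2)_n ≠ 0, ∑_{k=0}^{n} q^{binom(k,2)} · qbinom(n,k) · (1 - q^{2k}a) / (q^k a; q)_{n+1} = (-1; q)_n / (qa; q^2)_n, where (x; p)_m = ∏_{j=0}^{m-1}(1 - p^j x). -/
/-- The q-Pochhammer symbol `(x; p)_n = ∏_{j=0}^{n-1} (1 - p^j x)`. -/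
def qPoch {F : Type*} [Field F] (q x : F) (n : ℕ) : F :=
  ∏ j ∈ Finset.range n, (1 - q ^ j * x)

private lemma qPoch_zero {F : Type*} [Field F] (q x : F) : qPoch q x 0 = 1 :=
  Finset.prod_range_zero _

private lemma qPoch_succ {F : Type*} [Field F] (q x : F) (n : ℕ) :
    qPoch q x (n + 1) = qPoch q x n * (1 - q ^ n * x) :=
  Finset.prod_range_succ _ _

private lemma qPoch_succ' {F : Type*} [Field F] (q x : F) (n : ℕ) :
    qPoch q x (n + 1) = (1 - x) * qPoch q (q * x) n := by
  rw [qPoch, Finset.prod_range_succ', qPoch, pow_zero, one_mul, mul_comm]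
  congr 1
  exact Finset.prod_congr rfl fun i _ => by ring

private lemma qPoch_factor_ne {F : Type*} [Field F] {q x : F} {m : ℕ}
    (h : qPoch q x m ≠ 0) {j : ℕ} (hj : j < m) : 1 - q ^ j * x ≠ 0 := by
  intro h0
  exact h (Finset.prod_eq_zero (Finset.mem_range.mpr hj) h0)

private lemma qPoch_prefix_ne {F : Type*} [Field F] {q x : F} {m l : ℕ}
    (h : qPoch q x m ≠ 0) (hl : l ≤ m) : qPoch q x l ≠ 0 := by
  obtain ⟨r, rfl⟩ := Nat.exists_eq_add_of_le hl
  rw [qPoch, Finset.prod_range_add] at h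
  rw [qPoch]
  exact left_ne_zero_of_mul h

private lemma qPoch_shift {F : Type*} [Field F] (q a : F) (k N : ℕ) :
    (1 - q ^ k * a) * qPoch q (q ^ (k + 1) * a) (N + 1)
      = qPoch q (q ^ k * a) (N + 1) * (1 - q ^ (N + 1) * (q ^ k * a)) := by
  have h1 : q * (q ^ k * a) = q ^ (k + 1) * a := by ring
  rw [← h1, ← qPoch_succ', qPoch_succ]

set_option maxHeartbeats 2000000 in
theorem stmt_19 {F : Type*} [Field F] (q a : F) (n : ℕ)
    (hq : ∀ m : ℕ, 1 ≤ m → q ^ m ≠ 1)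
    (ha : ∀ k : ℕ, k ≤ n → qPoch q (q ^ k * a) (n + 1) ≠ 0)
    (ha2 : qPoch (q ^ 2) (q * a) n ≠ 0) :
    ∑ k ∈ Finset.range (n + 1),
        q ^ k.choose 2 *
          (qPoch q q n / (qPoch q q k * qPoch q q (n - k))) *
          ((1 - q ^ (2 * k) * a) / qPoch q (q ^ k * a) (n + 1))
      = qPoch q (-1) n / qPoch (q ^ 2) (q * a) n := by
  rcases eq_or_ne q 0 with hq0 | hq0
  · subst hq0
    have h00 : ∀ m : ℕ, qPoch (0 : F) 0 m = 1 := by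
      intro m
      rw [qPoch]
      exact Finset.prod_eq_one fun i _ => by simp
    have h0x : ∀ (x : F) (m : ℕ), qPoch (0 : F) x (m + 1) = 1 - x := by
      intro x m
      rw [qPoch_succ', zero_mul, h00, mul_one]
    have h1a : (1 : F) - a ≠ 0 := by
      have := ha 0 (Nat.zero_le n)
      rwa [h0x, pow_zero, one_mul] at this
    have hterm : ∀ k ∈ Finset.range (n + 1),
        (0 : F) ^ k.choose 2 *
          (qPoch (0 : F) 0 n / (qPoch (0 : F) 0 k * qPoch (0 : F) 0 (n - k))) *
          ((1 - (0 : F) ^ (2 * k) * a) / qPoch (0 : F) ((0 : F) ^ k * a) (n + 1))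
        = (if k = 0 then 1 else 0) + (if k = 1 then 1 else 0) := by
      intro k _
      match k with
      | 0 =>
        rw [h00, h00, h00, h0x]
        norm_num
        exact h1a
      | 1 =>
        rw [h00, h00, h00, h0x]
        norm_num
      | (k + 2) =>
        have hc : (k + 2).choose 2 ≠ 0 := (Nat.choose_pos (by omega : 2 ≤ k + 2)).ne'
        rw [zero_pow hc]
        simp
    rw [Finset.sum_congr rfl hterm, Finset.sum_add_distrib,
      Finset.sum_ite_eq' (Finset.range (n + 1)) 0 (fun _ => (1 : F)),
      Finset.sum_ite_eq' (Finset.range (n + 1)) 1 (fun _ => (1 : F))]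
    have h02 : ((0 : F) ^ 2) = 0 := by norm_num
    rw [h02, zero_mul, h00]
    match n with
    | 0 => simp [qPoch_zero]
    | (m + 1) =>
      rw [h0x]
      simp [Finset.mem_range]
  · revert ha ha2
    induction n with
    | zero =>
      intro ha ha2
      have h1 := ha 0 le_rfl
      simp [qPoch] at h1 ⊢
      exact h1
    | succ n ih =>
      intro ha ha2
      have hQ : ∀ m : ℕ, qPoch q q m ≠ 0 := by
        intro m
        rw [qPoch]
        refine Finset.prod_ne_zero_iff.mpr fun i _ => ?_
        rw [← pow_succ]
        exact sub_ne_zero_of_ne (hq (i + 1) (by omega)).symm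
      have hPn : ∀ k : ℕ, k ≤ n + 1 → qPoch q (q ^ k * a) (n + 1) ≠ 0 :=
        fun k hk => qPoch_prefix_ne (ha k hk) (by omega)
      have ha' : ∀ k : ℕ, k ≤ n → qPoch q (q ^ k * a) (n + 1) ≠ 0 :=
        fun k hk => hPn k (by omega)
      have ha2' : qPoch (q ^ 2) (q * a) n ≠ 0 := qPoch_prefix_ne ha2 (by omega)
      have hodd : 1 - q ^ (2 * n + 1) * a ≠ 0 := by
        have h := qPoch_factor_ne ha2 (Nat.lt_succ_self n)
        have e : (q ^ 2) ^ n * (q * a) = q ^ (2 * n + 1) * a := by ring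
        rwa [e] at h
      have hS := ih ha' ha2'
      set G : ℕ → F := fun k =>
        if 1 ≤ k ∧ k ≤ n + 1 then
          -(q ^ k.choose 2 *
              (qPoch q q n / (qPoch q q (k - 1) * qPoch q q (n - (k - 1)))) *
              (q ^ n * (q - a * q ^ (2 * k)) /
                ((1 - q ^ (2 * n + 1) * a) * (q ^ k * qPoch q (q ^ k * a) (n + 1)))))
        else 0 with hG
      have key : ∀ k ∈ Finset.range (n + 1 + 1),
          q ^ k.choose 2 *
            (qPoch q q (n + 1) / (qPoch q q k * qPoch q q (n + 1 - k))) *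
            ((1 - q ^ (2 * k) * a) / qPoch q (q ^ k * a) (n + 1 + 1))
          = (1 + q ^ n) / (1 - q ^ (2 * n + 1) * a) *
              (if k ≤ n then
                q ^ k.choose 2 *
                  (qPoch q q n / (qPoch q q k * qPoch q q (n - k))) *
                  ((1 - q ^ (2 * k) * a) / qPoch q (q ^ k * a) (n + 1))
               else 0)
            + (G (k + 1) - G k) := by
        intro k hk
        rw [Finset.mem_range] at hk
        by_cases hk0 : k = 0
        · subst hk0
          rw [if_pos (Nat.zero_le n)]
          have hG0 : G 0 = 0 := by simp only [hG]; rw [if_neg (by omega)]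
          rw [hG0, sub_zero]
          simp only [hG]
          rw [if_pos (show 1 ≤ 1 ∧ 1 ≤ n + 1 by omega)]
          norm_num
          rw [qPoch_zero, qPoch_succ q a (n + 1)]
          have h1a : (1 : F) - a ≠ 0 := by
            have h := qPoch_factor_ne (ha 0 (by omega)) (show 0 < n + 1 + 1 by omega)
            norm_num at h
            exact h
          have hfn : 1 - q ^ (n + 1) * a ≠ 0 := by
            have h := qPoch_factor_ne (ha 0 (by omega)) (show n + 1 < n + 1 + 1 by omega)
            norm_num at h
            exact h
          have hP0 : qPoch q a (n + 1) ≠ 0 := by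
            have h := hPn 0 (by omega)
            norm_num at h
            exact h
          have hs : (1 - a) * qPoch q (q * a) (n + 1)
              = qPoch q a (n + 1) * (1 - q ^ (n + 1) * a) := by
            rw [← qPoch_succ', qPoch_succ]
          have hP1 : qPoch q (q * a) (n + 1)
              = qPoch q a (n + 1) * (1 - q ^ (n + 1) * a) / (1 - a) := by
            rw [eq_div_iff h1a]
            linear_combination hs
          rw [hP1]
          have hQn := hQ n
          have hQn1 := hQ (n + 1)
          set A := 1 - q ^ (n + 1) * a with hA
          set B := 1 - q ^ (2 * n + 1) * a with hB
          field_simp [hq0, h1a, hfn, hP0, hodd, hQn, hQn1]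
          rw [hA, hB]
          ring
        · by_cases hktop : k = n + 1
          · subst hktop
            have hGtop : G (n + 1 + 1) = 0 := by simp only [hG]; rw [if_neg (by omega)]
            rw [if_neg (by omega : ¬ (n + 1 ≤ n)), hGtop, mul_zero, zero_add, zero_sub]
            simp only [hG]
            rw [if_pos (show 1 ≤ n + 1 ∧ n + 1 ≤ n + 1 by omega)]
            have e1 : n + 1 - 1 = n := by omega
            have e2 : n - n = 0 := by omega
            have e3 : n + 1 - (n + 1) = 0 := by omega
            rw [e1, e2, e3, qPoch_zero]
            rw [qPoch_succ q (q ^ (n + 1) * a) (n + 1)]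
            have hPne := hPn (n + 1) le_rfl
            have hfn : 1 - q ^ (n + 1) * (q ^ (n + 1) * a) ≠ 0 :=
              qPoch_factor_ne (ha (n + 1) le_rfl) (by omega)
            have hA1 := hQ (n + 1)
            have hQn := hQ n
            have hqk : q ^ (n + 1) ≠ 0 := pow_ne_zero _ hq0
            set A := 1 - q ^ (n + 1) * (q ^ (n + 1) * a) with hA
            set B := 1 - q ^ (2 * n + 1) * a with hB
            field_simp
            rw [hA, hB]
            ring
          · obtain ⟨j, rfl⟩ : ∃ j, k = j + 1 := ⟨k - 1, by omega⟩
            have hkn : j + 1 ≤ n := by omega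
            obtain ⟨m, hm⟩ : ∃ m, n = j + 1 + m := ⟨n - (j + 1), by omega⟩
            rw [if_pos hkn]
            simp only [hG]
            rw [if_pos (show 1 ≤ j + 1 + 1 ∧ j + 1 + 1 ≤ n + 1 by omega),
              if_pos (show 1 ≤ j + 1 ∧ j + 1 ≤ n + 1 by omega)]
            have e3 : j + 1 + 1 - 1 = j + 1 := by omega
            have e4 : j + 1 - 1 = j := by omega
            rw [e3, e4]
            have e1 : n - (j + 1) = m := by omega
            have e2 : n + 1 - (j + 1) = m + 1 := by omega
            have e5 : n - j = m + 1 := by omega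
            rw [e1, e2, e5]
            have ec : (j + 1 + 1).choose 2 = (j + 1).choose 2 + (j + 1) := by
              rw [Nat.choose_succ_succ (j + 1) 1, Nat.choose_one_right, Nat.add_comm]
            rw [ec, show q ^ ((j + 1).choose 2 + (j + 1))
              = q ^ (j + 1).choose 2 * q ^ (j + 1) from pow_add q _ _]
            rw [qPoch_succ q (q ^ (j + 1) * a) (n + 1)]
            rw [qPoch_succ q q n, qPoch_succ q q m, qPoch_succ q q j]
            have hfj : 1 - q ^ (j + 1) * a ≠ 0 := by
              have h := qPoch_factor_ne (ha (j + 1) (by omega)) (show 0 < n + 1 + 1 by omega)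
              norm_num at h
              exact h
            have hfn2 : 1 - q ^ (n + 1) * (q ^ (j + 1) * a) ≠ 0 :=
              qPoch_factor_ne (ha (j + 1) (by omega)) (show n + 1 < n + 1 + 1 by omega)
            have hPne : qPoch q (q ^ (j + 1) * a) (n + 1) ≠ 0 := hPn (j + 1) (by omega)
            have hP2 : qPoch q (q ^ (j + 1 + 1) * a) (n + 1)
                = qPoch q (q ^ (j + 1) * a) (n + 1) * (1 - q ^ (n + 1) * (q ^ (j + 1) * a)) /
                  (1 - q ^ (j + 1) * a) := by
              rw [eq_div_iff hfj]
              linear_combination qPoch_shift q a (j + 1) n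
            rw [hP2]
            rw [hm] at hfn2 hPne hodd ⊢
            have hQj := hQ j
            have hQm := hQ m
            have hQn' := hQ (j + 1 + m)
            have h1j : 1 - q ^ j * q ≠ 0 := by
              rw [← pow_succ]
              exact sub_ne_zero_of_ne (hq (j + 1) (by omega)).symm
            have h1m : 1 - q ^ m * q ≠ 0 := by
              rw [← pow_succ]
              exact sub_ne_zero_of_ne (hq (m + 1) (by omega)).symm
            have h1n : 1 - q ^ (j + 1 + m) * q ≠ 0 := by
              rw [← pow_succ]
              exact sub_ne_zero_of_ne (hq (j + 1 + m + 1) (by omega)).symm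
            have hqj : q ^ (j + 1) ≠ 0 := pow_ne_zero _ hq0
            have r1 : q ^ (2 * (j + 1 + m) + 1) = (q ^ j) ^ 2 * (q ^ m) ^ 2 * q ^ 3 := by ring
            have r2 : q ^ (j + 1 + m + 1) = q ^ j * q ^ m * q ^ 2 := by ring
            have r3 : q ^ (j + 1 + m) = q ^ j * q ^ m * q := by ring
            have r4 : q ^ (2 * (j + 1 + 1)) = (q ^ j) ^ 2 * q ^ 4 := by ring
            have r5 : q ^ (2 * (j + 1)) = (q ^ j) ^ 2 * q ^ 2 := by ring
            have r6 : q ^ (j + 1 + 1) = q ^ j * q ^ 2 := by ring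
            have r7 : q ^ (j + 1) = q ^ j * q := by ring
            simp only [r1, r2, r3, r4, r5, r6, r7] at hfj hfn2 hPne hodd hqj ⊢
            have hqjj : q ^ j ≠ 0 := pow_ne_zero _ hq0
            set A1 := 1 - q ^ j * q with hA1
            set A2 := 1 - q ^ m * q with hA2
            set A3 := 1 - q ^ j * q ^ m * q ^ 2 * (q ^ j * q * a) with hA3
            set A4 := 1 - (q ^ j) ^ 2 * (q ^ m) ^ 2 * q ^ 3 * a with hA4
            set A5 := 1 - q ^ j * q * a with hA5
            rw [← sub_eq_zero]
            field_simp [hq0, hfj, hfn2, hPne, hodd, hQj, hQm, hQn', h1j, h1m, h1n, hqjj]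
            rw [hA1, hA2, hA3, hA4, hA5]
            ring
      rw [Finset.sum_congr rfl key, Finset.sum_add_distrib, Finset.sum_range_sub G,
        ← Finset.mul_sum, Finset.sum_range_succ]
      rw [if_neg (by omega : ¬ (n + 1 ≤ n)), add_zero]
      have hite : ∀ k ∈ Finset.range (n + 1),
          (if k ≤ n then
              q ^ k.choose 2 *
                (qPoch q q n / (qPoch q q k * qPoch q q (n - k))) *
                ((1 - q ^ (2 * k) * a) / qPoch q (q ^ k * a) (n + 1))
           else 0)
          = q ^ k.choose 2 *
              (qPoch q q n / (qPoch q q k * qPoch q q (n - k))) *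
              ((1 - q ^ (2 * k) * a) / qPoch q (q ^ k * a) (n + 1)) := by
        intro k hk
        rw [Finset.mem_range] at hk
        exact if_pos (by omega)
      rw [Finset.sum_congr rfl hite, hS]
      have hG0 : G 0 = 0 := by simp only [hG]; rw [if_neg (by omega)]
      have hGtop : G (n + 1 + 1) = 0 := by simp only [hG]; rw [if_neg (by omega)]
      rw [hG0, hGtop, sub_zero, add_zero]
      rw [qPoch_succ q (-1) n, qPoch_succ (q ^ 2) (q * a) n]
      have hf : 1 - (q ^ 2) ^ n * (q * a) ≠ 0 := qPoch_factor_ne ha2 (Nat.lt_succ_self n)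
      have e : (q ^ 2) ^ n * (q * a) = q ^ (2 * n + 1) * a := by ring
      rw [e]
      rw [e] at hf
      field_simp
      ring
end
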